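/- The 12×7 complex matrix A(1, −1, −1, 1, 1, −1, 1) has rank at most 4; that is, the point ρ₁ = (1, −1, −1, 1, 1, −1, 1, −1) belongs to the second characteristic variety V₂(D). -/

import Mathlib

open Matrix

/-- The Alexander matrix of the fundamental group of the complement of the
deconed deleted B₃ arrangement, evaluated at `(t₁, …, t₇)`. -/
noncomputable def alexD (t₁ t₂ t₃ t₄ t₅ t₆ t₇ : ℂ) : Matrix (Fin 12) (Fin 7) ℂ :=
  !![1 - t₅, 0, 0, 0, t₁ - 1, 0, 0;
     0, t₅ * (t₃ - 1), 1 - t₂ * t₅, 0, t₃ - 1, 0, 0;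
     0, 1 - t₅, t₂ * (1 - t₅), 0, t₂ * t₃ - 1, 0, 0;
     0, 0, 0, 1 - t₅, t₄ - 1, 0, 0;
     t₆ * (t₃ - 1), (t₃ - 1) * (t₁ * t₆ - 1), t₂ * (1 - t₁ * t₆), 0, 0, t₃ - 1, 0;
     1 - t₆, t₁ * (t₃ - 1) * (t₆ - 1), t₁ * t₂ * (1 - t₆), 0, 0, t₁ * t₃ - 1, 0;
     0, t₆ * (t₄ - 1), 0, 1 - t₂ * t₆, 0, t₄ - 1, 0;
     0, 1 - t₆, 0, t₂ * (1 - t₆), 0, t₂ * t₄ - 1, 0;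
     t₇ * (t₄ - 1), (t₄ - 1) * (t₁ * t₇ - 1), 0, t₂ * (1 - t₁ * t₇), 0, 0, t₄ - 1;
     1 - t₇, t₁ * (1 - t₇), 0, t₁ * t₂ * (1 - t₇), 0, 0, t₁ * t₂ * t₄ - 1;
     0, 1 - t₇, 0, 0, 0, 0, t₂ - 1;
     0, 0, 1 - t₇, (t₃ - 1) * (1 - t₇), 0, 0, t₄ * (t₃ - 1)]

/-- The `d`-th characteristic variety of the deleted B₃ arrangement `D`:
points `x` of the algebraic torus `(ℂ*)⁸` such that `(x₁,…,x₇) ∈ V_d(D*)`,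
i.e. `rank A(x₁,…,x₇) < 7 - d`, and `x₁x₂⋯x₈ = 1`. -/
noncomputable def VD (d : ℕ) : Set (Fin 8 → ℂ) :=
  {x | (∀ i, x i ≠ 0) ∧
       (alexD (x 0) (x 1) (x 2) (x 3) (x 4) (x 5) (x 6)).rank < 7 - d ∧
       x 0 * x 1 * x 2 * x 3 * x 4 * x 5 * x 6 * x 7 = 1}

noncomputable def Bmat : Matrix (Fin 12) (Fin 4) ℂ :=
  !![0, 0, 0, 0;
     1, 0, 0, 0;
     0, 0, 0, 0;
     0, 0, 0, 0;
     0, 1, 0, 0;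
     0, 1, 0, 0;
     0, 0, 0, 0;
     0, 0, 1, 0;
     0, 0, 0, 0;
     0, 0, 0, 1;
     0, 0, 0, 1;
     0, 0, 0, 1]

noncomputable def Cmat : Matrix (Fin 4) (Fin 7) ℂ :=
  !![0, -2, 2, 0, -2, 0, 0;
     2, 4, -2, 0, 0, -2, 0;
     0, 2, 0, -2, 0, -2, 0;
     0, 0, 0, 0, 0, 0, -2]

set_option maxHeartbeats 2000000 in
lemma alexD_factor : alexD 1 (-1) (-1) 1 1 (-1) 1 = Bmat * Cmat := by
  show _ = _
  norm_num [alexD, Bmat, Cmat, ← Matrix.ext_iff, Matrix.mul_apply, Fin.sum_univ_succ,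
    Fin.forall_fin_succ, funext_iff, Matrix.cons_val_zero, Matrix.cons_val_one, Matrix.head_cons,
    Matrix.cons_val_succ]

lemma alexD_rank_le : (alexD 1 (-1) (-1) 1 1 (-1) 1).rank ≤ 4 := by
  rw [alexD_factor]
  calc (Bmat * Cmat).rank ≤ Cmat.rank := Matrix.rank_mul_le_right Bmat Cmat
    _ ≤ 4 := by simpa using Matrix.rank_le_card_height Cmat

/-- the point `ρ₁ = (1, −1, −1, 1, 1, −1, 1, −1)` belongs to the
second characteristic variety `V₂(D)`. -/
theorem rho1_in_V2 :
    (alexD 1 (-1) (-1) 1 1 (-1) 1).rank ≤ 4 ∧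
    (![1, -1, -1, 1, 1, -1, 1, -1] : Fin 8 → ℂ) ∈ VD 2 := by
  refine ⟨alexD_rank_le, ?_, ?_, ?_⟩
  · intro i
    fin_cases i <;> norm_num
  · show (alexD 1 (-1) (-1) 1 1 (-1) 1).rank < 7 - 2
    have := alexD_rank_le
    omega
  · norm_num [Matrix.cons_val_zero, Matrix.cons_val_one, Matrix.head_cons, Matrix.cons_val_succ,
      show (![1, -1, -1, 1, 1, -1, 1, -1] : Fin 8 → ℂ) 2 = -1 from rfl,
      show (![1, -1, -1, 1, 1, -1, 1, -1] : Fin 8 → ℂ) 3 = 1 from rfl,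
      show (![1, -1, -1, 1, 1, -1, 1, -1] : Fin 8 → ℂ) 4 = 1 from rfl,
      show (![1, -1, -1, 1, 1, -1, 1, -1] : Fin 8 → ℂ) 5 = -1 from rfl,
      show (![1, -1, -1, 1, 1, -1, 1, -1] : Fin 8 → ℂ) 6 = 1 from rfl,
      show (![1, -1, -1, 1, 1, -1, 1, -1] : Fin 8 → ℂ) 7 = -1 from rfl]
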